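/- Let V be a finite type and E a DAG on V. Let X = {X₁, …, X_k} (k ≥ 1, distinct), {Y}, and W be pairwise disjoint vertex sets with causal ordering W < {X₁} < ⋯ < {X_k} < {Y}. Suppose there exist W₁, …, W_k ∈ W and Z ⊆ W \ {W₁, …, W_k} such that for every i ∈ {1, …, k}: (i) W_i and Y are d-connected given Z ∪ {X₁, …, X_{i-1}}, and (ii) W_i and Y are d-separated given Z ∪ {X₁, …, X_i}. Then for every i there is a directed path from X_i to Y with at least one edge, and Z ∪ (X \ {X_i}) blocks every back-door path from X_i to Y; in particular Z satisfies the back-door criterion relative to (X, {Y}). -/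

import Mathlib

open scoped Classical

variable {V : Type*}

/-- `a` is an ancestor of `b` (every vertex is its own ancestor). -/
def Anc (E : V → V → Prop) (a b : V) : Prop := Relation.ReflTransGen E a b

/-- A path in a directed graph `E` from `a` to `b`: a sequence of distinct vertices
`a = vtx 0, …, vtx len = b` (`len ≥ 1`) in which consecutive vertices are joined
by an edge of `E` in either direction. -/
structure GPath (E : V → V → Prop) (a b : V) where
  len : ℕ
  len_pos : 0 < len
  vtx : ℕ → V
  first : vtx 0 = a
  last : vtx len = b
  inj : ∀ i j, i ≤ len → j ≤ len → vtx i = vtx j → i = j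
  adj : ∀ i, i < len → E (vtx i) (vtx (i + 1)) ∨ E (vtx (i + 1)) (vtx i)

namespace GPath

variable {E : V → V → Prop} {a b : V}

/-- The interior vertex at position `i` is a collider on the path. -/
def IsColliderAt (p : GPath E a b) (i : ℕ) : Prop :=
  0 < i ∧ i < p.len ∧ E (p.vtx (i - 1)) (p.vtx i) ∧ E (p.vtx (i + 1)) (p.vtx i)

/-- A path is open given `S` if no non-collider on it lies in `S` and every collider
on it has a descendant in `S`. -/
def OpenGiven (p : GPath E a b) (S : Set V) : Prop :=
  (∀ i, 0 < i → i < p.len → ¬ p.IsColliderAt i → p.vtx i ∉ S) ∧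
  (∀ i, p.IsColliderAt i → ∃ d ∈ S, Anc E (p.vtx i) d)

/-- A back-door path: the first edge points into the first vertex. -/
def IsBackdoor (p : GPath E a b) : Prop := E (p.vtx 1) (p.vtx 0)

/-- A causal (directed) path. -/
def Causal (p : GPath E a b) : Prop := ∀ i, i < p.len → E (p.vtx i) (p.vtx (i + 1))

/-- A path is proper with respect to `X` if only its first vertex lies in `X`. -/
def ProperFrom (p : GPath E a b) (X : Set V) : Prop :=
  ∀ i, 0 < i → i ≤ p.len → p.vtx i ∉ X

/-- The vertex `w` lies on the path. -/
def MemV (p : GPath E a b) (w : V) : Prop := ∃ i ≤ p.len, p.vtx i = w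

/-- The number of colliders on the path. -/
noncomputable def numColliders (p : GPath E a b) : ℕ := Set.ncard {i | p.IsColliderAt i}

end GPath

/-- `A` and `B` are d-separated given `S`: every path from `A` to `B` is blocked given `S`. -/
def DSep (E : V → V → Prop) (A B S : Set V) : Prop :=
  ∀ a ∈ A, ∀ b ∈ B, ∀ p : GPath E a b, ¬ p.OpenGiven S

/-- `A` and `B` are d-connected given `S`: some path from `A` to `B` is open given `S`. -/
def DConn (E : V → V → Prop) (A B S : Set V) : Prop :=
  ∃ a ∈ A, ∃ b ∈ B, ∃ p : GPath E a b, p.OpenGiven S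

/-- The set of descendants of a vertex set `S`. -/
def descendants (E : V → V → Prop) (S : Set V) : Set V := {d | ∃ s ∈ S, Anc E s d}

/-- `S` blocks every back-door path from `x` to `y`. -/
def BlocksBackdoor (E : V → V → Prop) (x y : V) (S : Set V) : Prop :=
  ∀ p : GPath E x y, p.IsBackdoor → ¬ p.OpenGiven S

/-- The back-door criterion for `Z` relative to `(X, Y)`. -/
def BackdoorCriterion (E : V → V → Prop) (X Y Z : Set V) : Prop :=
  Z ∩ descendants E X = ∅ ∧
  ∀ x ∈ X, ∀ y ∈ Y, BlocksBackdoor E x y (Z ∪ (X \ {x}))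

/-- The adjustment criterion for `Z` relative to `(X, Y)`: (a) `Z` contains no
descendant of any `w ∉ X` lying on a proper causal path from `X` to `Y`, and
(b) `Z` blocks every proper non-causal path from `X` to `Y`. -/
def AdjustmentCriterion (E : V → V → Prop) (X Y Z : Set V) : Prop :=
  (∀ w, w ∉ X →
      (∃ x ∈ X, ∃ y ∈ Y, ∃ p : GPath E x y, p.ProperFrom X ∧ p.Causal ∧ p.MemV w) →
      ∀ z ∈ Z, ¬ Anc E w z) ∧
  (∀ x ∈ X, ∀ y ∈ Y, ∀ p : GPath E x y, p.ProperFrom X → ¬ p.Causal → ¬ p.OpenGiven Z)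


section Walks

variable {V : Type*} {E : V → V → Prop} {a b c : V}

/-- A walk: like `GPath` but vertices may repeat and length may be zero. -/
structure GWalk (E : V → V → Prop) (a b : V) where
  len : ℕ
  vtx : ℕ → V
  first : vtx 0 = a
  last : vtx len = b
  adj : ∀ i, i < len → E (vtx i) (vtx (i + 1)) ∨ E (vtx (i + 1)) (vtx i)

namespace GWalk

def Col (w : GWalk E a b) (i : ℕ) : Prop :=
  0 < i ∧ i < w.len ∧ E (w.vtx (i - 1)) (w.vtx i) ∧ E (w.vtx (i + 1)) (w.vtx i)

def Opn (w : GWalk E a b) (S : Set V) : Prop :=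
  (∀ i, 0 < i → i < w.len → ¬ w.Col i → w.vtx i ∉ S) ∧
  (∀ i, w.Col i → ∃ d ∈ S, Relation.ReflTransGen E (w.vtx i) d)

lemma no2cycle (hdag : Irreflexive (Relation.TransGen E)) {u v : V}
    (h1 : E u v) (h2 : E v u) : False :=
  hdag u (Relation.TransGen.head h1 (Relation.TransGen.single h2))

/-- Forward sweep: starting from a forward edge at `m`, either we reach `n` by a
directed subpath, or we hit a collider strictly between `m` and `n`, in both cases
through a directed subpath. -/
lemma fwd (w : GWalk E a b) (n : ℕ) (hn : n ≤ w.len) :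
    ∀ d m, n - m ≤ d → m < n → E (w.vtx m) (w.vtx (m + 1)) →
    ∃ t, m < t ∧ t ≤ n ∧ Relation.TransGen E (w.vtx m) (w.vtx t) ∧
      (t = n ∨ (t < n ∧ E (w.vtx (t - 1)) (w.vtx t) ∧ E (w.vtx (t + 1)) (w.vtx t))) := by
  intro d
  induction d with
  | zero => intro m h1 h2 _; omega
  | succ d ih =>
    intro m hd hm he
    by_cases h : m + 1 = n
    · exact ⟨m + 1, by omega, by omega, .single he, .inl h⟩
    · rcases w.adj (m + 1) (by omega) with h2 | h2
      · obtain ⟨t, ht1, ht2, ht3, ht4⟩ := ih (m + 1) (by omega) (by omega) h2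
        exact ⟨t, by omega, ht2, .head he ht3, ht4⟩
      · refine ⟨m + 1, by omega, by omega, .single he, .inr ⟨by omega, ?_, h2⟩⟩
        simpa using he

/-- Backward sweep. -/
lemma bwd (w : GWalk E a b) (n : ℕ) :
    ∀ d m, m - n ≤ d → n < m → m ≤ w.len → E (w.vtx m) (w.vtx (m - 1)) →
    ∃ t, n ≤ t ∧ t < m ∧ Relation.TransGen E (w.vtx m) (w.vtx t) ∧
      (t = n ∨ (n < t ∧ E (w.vtx (t - 1)) (w.vtx t) ∧ E (w.vtx (t + 1)) (w.vtx t))) := by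
  intro d
  induction d with
  | zero => intro m h1 h2 _ _; omega
  | succ d ih =>
    intro m hd hm hml he
    by_cases h : m - 1 = n
    · exact ⟨m - 1, by omega, by omega, .single he, .inl h⟩
    · have h2m : 2 ≤ m := by omega
      have hadj := w.adj (m - 2) (by omega)
      rw [show m - 2 + 1 = m - 1 by omega] at hadj
      rcases hadj with h2 | h2
      · refine ⟨m - 1, by omega, by omega, .single he, .inr ⟨by omega, ?_, ?_⟩⟩
        · rw [show m - 1 - 1 = m - 2 by omega]; exact h2
        · rw [show m - 1 + 1 = m by omega]; exact he
      · have h2' : E (w.vtx (m - 1)) (w.vtx (m - 1 - 1)) := by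
          rw [show m - 1 - 1 = m - 2 by omega]; exact h2
        obtain ⟨t, ht1, ht2, ht3, ht4⟩ := ih (m - 1) (by omega) (by omega) (by omega) h2'
        exact ⟨t, ht1, by omega, .head he ht3, ht4⟩

end GWalk
end Walks
section Walks2

variable {V : Type*} {E : V → V → Prop} {a b c : V}

namespace GWalk

def Directed (w : GWalk E a b) : Prop := ∀ i, i < w.len → E (w.vtx i) (w.vtx (i + 1))

/-- Extend a walk by one edge. -/
def snoc (w : GWalk E a b) (h : E b c) : GWalk E a c where
  len := w.len + 1
  vtx s := if s ≤ w.len then w.vtx s else c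
  first := by simp [w.first]
  last := by simp
  adj i hi := by
    have hi' : i < w.len + 1 := hi
    show E (if i ≤ w.len then w.vtx i else c) (if i + 1 ≤ w.len then w.vtx (i + 1) else c) ∨
      E (if i + 1 ≤ w.len then w.vtx (i + 1) else c) (if i ≤ w.len then w.vtx i else c)
    by_cases h1 : i + 1 ≤ w.len
    · rw [if_pos (by omega : i ≤ w.len), if_pos h1]
      exact w.adj i (by omega)
    · rw [if_pos (by omega : i ≤ w.len), if_neg h1, show i = w.len by omega, w.last]
      exact Or.inl h

lemma snoc_dir {w : GWalk E a b} (hw : w.Directed) (h : E b c) : (w.snoc h).Directed := by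
  intro i hi
  have hi' : i < w.len + 1 := hi
  show E (if i ≤ w.len then w.vtx i else c) (if i + 1 ≤ w.len then w.vtx (i + 1) else c)
  by_cases h1 : i + 1 ≤ w.len
  · rw [if_pos (by omega : i ≤ w.len), if_pos h1]
    exact hw i (by omega)
  · rw [if_pos (by omega : i ≤ w.len), if_neg h1, show i = w.len by omega, w.last]
    exact h

lemma exists_dirWalk (h : Relation.ReflTransGen E a b) :
    ∃ w : GWalk E a b, w.Directed := by
  induction h with
  | refl =>
    refine ⟨⟨0, fun _ => a, rfl, rfl, fun i hi => ?_⟩, fun i hi => ?_⟩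
    · exact absurd (show i < 0 from hi) (by omega)
    · exact absurd (show i < 0 from hi) (by omega)
  | @tail b' c' _ hbc ih =>
    obtain ⟨w, hw⟩ := ih
    exact ⟨w.snoc hbc, snoc_dir hw hbc⟩

lemma Directed.anc {w : GWalk E a b} (hw : w.Directed) {s : ℕ} :
    ∀ t, s ≤ t → t ≤ w.len → Relation.ReflTransGen E (w.vtx s) (w.vtx t) := by
  intro t
  induction t with
  | zero => intro h1 _; rw [Nat.le_zero.mp h1]
  | succ t ih =>
    intro h1 h2
    rcases Nat.lt_or_ge s (t + 1) with h | h
    · exact (ih (by omega) (by omega)).tail (hw t (by omega))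
    · rw [show s = t + 1 by omega]

lemma Directed.transGen {w : GWalk E a b} (hw : w.Directed) {s t : ℕ}
    (h1 : s < t) (h2 : t ≤ w.len) : Relation.TransGen E (w.vtx s) (w.vtx t) := by
  have h3 := hw s (by omega)
  have h4 := hw.anc (s := s + 1) t (by omega) h2
  exact Relation.TransGen.head' h3 h4

/-- Reverse a walk. -/
def rev (w : GWalk E a b) : GWalk E b a where
  len := w.len
  vtx s := w.vtx (w.len - s)
  first := by simpa using w.last
  last := by simpa using w.first
  adj i hi := by
    show E (w.vtx (w.len - i)) (w.vtx (w.len - (i + 1))) ∨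
      E (w.vtx (w.len - (i + 1))) (w.vtx (w.len - i))
    have h1 : w.len - i = (w.len - (i + 1)) + 1 := by omega
    rcases w.adj (w.len - (i + 1)) (by omega) with h | h
    · right; rw [h1]; exact h
    · left; rw [h1]; exact h

@[simp] lemma rev_len (w : GWalk E a b) : w.rev.len = w.len := rfl
lemma rev_vtx (w : GWalk E a b) (s : ℕ) : w.rev.vtx s = w.vtx (w.len - s) := rfl

/-- On the reverse of a directed walk every edge points backwards. -/
lemma rev_dir {w : GWalk E a b} (hw : w.Directed) :
    ∀ i, i < w.len → E (w.rev.vtx (i + 1)) (w.rev.vtx i) := by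
  intro i hi
  rw [rev_vtx, rev_vtx]
  have h1 : w.len - i = (w.len - (i + 1)) + 1 := by omega
  rw [h1]
  exact hw (w.len - (i + 1)) (by omega)

/-- Concatenate two walks. -/
def append (w1 : GWalk E a b) (w2 : GWalk E b c) : GWalk E a c where
  len := w1.len + w2.len
  vtx s := if s ≤ w1.len then w1.vtx s else w2.vtx (s - w1.len)
  first := by simp [w1.first]
  last := by
    show (if w1.len + w2.len ≤ w1.len then w1.vtx (w1.len + w2.len)
      else w2.vtx (w1.len + w2.len - w1.len)) = c
    by_cases h : w1.len + w2.len ≤ w1.len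
    · have h2 : w2.len = 0 := by omega
      rw [if_pos h, show w1.len + w2.len = w1.len by omega, w1.last]
      have := w2.last
      rw [h2] at this
      rw [← this, w2.first]
    · rw [if_neg h, show w1.len + w2.len - w1.len = w2.len by omega, w2.last]
  adj i hi := by
    have hi' : i < w1.len + w2.len := hi
    show E (if i ≤ w1.len then w1.vtx i else w2.vtx (i - w1.len))
        (if i + 1 ≤ w1.len then w1.vtx (i + 1) else w2.vtx (i + 1 - w1.len)) ∨
      E (if i + 1 ≤ w1.len then w1.vtx (i + 1) else w2.vtx (i + 1 - w1.len))
        (if i ≤ w1.len then w1.vtx i else w2.vtx (i - w1.len))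
    rcases Nat.lt_trichotomy i w1.len with h | h | h
    · rw [if_pos (by omega : i ≤ w1.len), if_pos (by omega : i + 1 ≤ w1.len)]
      exact w1.adj i (by omega)
    · rw [if_pos (by omega : i ≤ w1.len), if_neg (by omega : ¬ i + 1 ≤ w1.len), h, w1.last,
        show w1.len + 1 - w1.len = 1 by omega]
      have := w2.adj 0 (by omega)
      rw [w2.first] at this
      exact this
    · rw [if_neg (by omega : ¬ i ≤ w1.len), if_neg (by omega : ¬ i + 1 ≤ w1.len),
        show i + 1 - w1.len = (i - w1.len) + 1 by omega]
      exact w2.adj (i - w1.len) (by omega)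

@[simp] lemma append_len (w1 : GWalk E a b) (w2 : GWalk E b c) :
    (w1.append w2).len = w1.len + w2.len := rfl

lemma append_vtx_le {w1 : GWalk E a b} {w2 : GWalk E b c} {s : ℕ} (h : s ≤ w1.len) :
    (w1.append w2).vtx s = w1.vtx s := if_pos h

lemma append_vtx_ge {w1 : GWalk E a b} {w2 : GWalk E b c} {s : ℕ} (h : w1.len ≤ s) :
    (w1.append w2).vtx s = w2.vtx (s - w1.len) := by
  rcases Nat.lt_or_ge w1.len s with h1 | h1
  · exact if_neg (by omega)
  · have h2 : s = w1.len := by omega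
    rw [h2]
    show (if w1.len ≤ w1.len then w1.vtx w1.len else w2.vtx (w1.len - w1.len)) = _
    rw [if_pos le_rfl, Nat.sub_self, w2.first, w1.last]

end GWalk
end Walks2
section Walks3

variable {V : Type*} {E : V → V → Prop} {a b c : V}

namespace GWalk

/-- Initial segment of a walk. -/
def take (w : GWalk E a b) (m : ℕ) (hm : m ≤ w.len) (h : w.vtx m = c) : GWalk E a c :=
  ⟨m, w.vtx, w.first, h, fun i hi => w.adj i (by omega)⟩

@[simp] lemma take_len (w : GWalk E a b) (m : ℕ) (hm : m ≤ w.len) (h : w.vtx m = c) : (w.take m hm h).len = m := rfl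
@[simp] lemma take_vtx (w : GWalk E a b) (m : ℕ) (hm : m ≤ w.len) (h : w.vtx m = c) (s : ℕ) :
    (w.take m hm h).vtx s = w.vtx s := rfl

/-- Final segment of a walk. -/
def drop (w : GWalk E a b) (m : ℕ) (hm : m ≤ w.len) (h : w.vtx m = c) : GWalk E c b where
  len := w.len - m
  vtx s := w.vtx (m + s)
  first := by simpa using h
  last := by
    show w.vtx (m + (w.len - m)) = b
    rw [show m + (w.len - m) = w.len by omega]; exact w.last
  adj i hi := by
    have hi' : i < w.len - m := hi
    show E (w.vtx (m + i)) (w.vtx (m + (i + 1))) ∨ E (w.vtx (m + (i + 1))) (w.vtx (m + i))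
    rw [show m + (i + 1) = (m + i) + 1 by omega]
    exact w.adj (m + i) (by omega)

@[simp] lemma drop_len (w : GWalk E a b) (m : ℕ) (hm : m ≤ w.len) (h : w.vtx m = c) : (w.drop m hm h).len = w.len - m := rfl
lemma drop_vtx (w : GWalk E a b) (m : ℕ) (hm : m ≤ w.len) (h : w.vtx m = c) (s : ℕ) :
    (w.drop m hm h).vtx s = w.vtx (m + s) := rfl

/-- Collider transfer for `take`. -/
lemma take_col {w : GWalk E a b} {m : ℕ} {hm : m ≤ w.len} {h : w.vtx m = c} {s : ℕ} (hs : s < m) :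
    (w.take m hm h).Col s ↔ w.Col s := by
  unfold Col
  simp only [take_len, take_vtx]
  constructor
  · rintro ⟨h1, h2, h3, h4⟩; exact ⟨h1, by omega, h3, h4⟩
  · rintro ⟨h1, h2, h3, h4⟩; exact ⟨h1, hs, h3, h4⟩

/-- Collider transfer for `drop`. -/
lemma drop_col {w : GWalk E a b} {m : ℕ} {hm : m ≤ w.len} {h : w.vtx m = c} {s : ℕ} (hs0 : 0 < s) (hs : s < w.len - m) :
    (w.drop m hm h).Col s ↔ w.Col (m + s) := by
  unfold Col
  simp only [drop_len, drop_vtx]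
  rw [show m + (s - 1) = (m + s) - 1 by omega, show m + (s + 1) = (m + s) + 1 by omega]
  constructor
  · rintro ⟨h1, h2, h3, h4⟩; exact ⟨by omega, by omega, h3, h4⟩
  · rintro ⟨h1, h2, h3, h4⟩; exact ⟨hs0, hs, h3, h4⟩

/-- Collider transfer for `append`, left part. -/
lemma append_col_lt {w1 : GWalk E a b} {w2 : GWalk E b c} {s : ℕ} (hs0 : 0 < s)
    (hs : s < w1.len) : (w1.append w2).Col s ↔ w1.Col s := by
  unfold Col
  rw [append_vtx_le (by omega : s - 1 ≤ w1.len), append_vtx_le (by omega : s ≤ w1.len),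
    append_vtx_le (by omega : s + 1 ≤ w1.len), append_len]
  constructor
  · rintro ⟨h1, h2, h3, h4⟩; exact ⟨h1, hs, h3, h4⟩
  · rintro ⟨h1, h2, h3, h4⟩; exact ⟨h1, by omega, h3, h4⟩

/-- Collider transfer for `append`, right part. -/
lemma append_col_gt {w1 : GWalk E a b} {w2 : GWalk E b c} {s : ℕ} (hs0 : w1.len < s)
    (hs : s < w1.len + w2.len) : (w1.append w2).Col s ↔ w2.Col (s - w1.len) := by
  unfold Col
  rw [append_vtx_ge (by omega : w1.len ≤ s - 1), append_vtx_ge (by omega : w1.len ≤ s),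
    append_vtx_ge (by omega : w1.len ≤ s + 1), append_len,
    show s - 1 - w1.len = (s - w1.len) - 1 by omega,
    show s + 1 - w1.len = (s - w1.len) + 1 by omega]
  constructor
  · rintro ⟨h1, h2, h3, h4⟩; exact ⟨by omega, by omega, h3, h4⟩
  · rintro ⟨h1, h2, h3, h4⟩; exact ⟨by omega, by omega, h3, h4⟩

/-- Collider characterization at the seam of `append`. -/
lemma append_col_mid {w1 : GWalk E a b} {w2 : GWalk E b c} (h1 : 0 < w1.len)
    (h2 : 0 < w2.len) :
    (w1.append w2).Col w1.len ↔ (E (w1.vtx (w1.len - 1)) b ∧ E (w2.vtx 1) b) := by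
  unfold Col
  rw [append_vtx_le (by omega : w1.len - 1 ≤ w1.len), append_vtx_le (le_rfl),
    append_vtx_ge (by omega : w1.len ≤ w1.len + 1), append_len,
    show w1.len + 1 - w1.len = 1 by omega, w1.last]
  constructor
  · rintro ⟨_, _, h3, h4⟩; exact ⟨h3, h4⟩
  · rintro ⟨h3, h4⟩; exact ⟨h1, by omega, h3, h4⟩

lemma append_vtx_mid {w1 : GWalk E a b} {w2 : GWalk E b c} :
    (w1.append w2).vtx w1.len = b := by rw [append_vtx_le le_rfl, w1.last]

/-- Openness of a concatenation given the seam conditions. -/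
lemma append_open {w1 : GWalk E a b} {w2 : GWalk E b c} {S : Set V}
    (h1 : w1.Opn S) (h2 : w2.Opn S)
    (hcol : 0 < w1.len → 0 < w2.len → E (w1.vtx (w1.len - 1)) b → E (w2.vtx 1) b →
      ∃ d ∈ S, Relation.ReflTransGen E b d)
    (hnon : 0 < w1.len → 0 < w2.len → ¬ (E (w1.vtx (w1.len - 1)) b ∧ E (w2.vtx 1) b) →
      b ∉ S) :
    (w1.append w2).Opn S := by
  constructor
  · intro s hs0 hslt hnc
    rw [append_len] at hslt
    rcases Nat.lt_trichotomy s w1.len with h | h | h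
    · rw [append_vtx_le (by omega)]
      exact h1.1 s hs0 h (fun hc => hnc ((append_col_lt hs0 h).mpr hc))
    · have hl1 : 0 < w1.len := by omega
      have hl2 : 0 < w2.len := by omega
      rw [h, append_vtx_mid]
      refine hnon hl1 hl2 (fun hc => hnc ?_)
      rw [h]
      exact (append_col_mid hl1 hl2).mpr hc
    · rw [append_vtx_ge (by omega)]
      exact h2.1 (s - w1.len) (by omega) (by omega)
        (fun hc => hnc ((append_col_gt h (by omega)).mpr hc))
  · intro s hc
    have hslt : s < w1.len + w2.len := by
      have := hc.2.1
      rw [append_len] at this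
      exact this
    have hs0 : 0 < s := hc.1
    rcases Nat.lt_trichotomy s w1.len with h | h | h
    · rw [append_vtx_le (by omega)]
      exact h1.2 s ((append_col_lt hs0 h).mp hc)
    · have hl1 : 0 < w1.len := by omega
      have hl2 : 0 < w2.len := by omega
      rw [h, append_vtx_mid]
      have := (append_col_mid hl1 hl2).mp (h ▸ hc)
      exact hcol hl1 hl2 this.1 this.2
    · rw [append_vtx_ge (by omega)]
      exact h2.2 (s - w1.len) ((append_col_gt h (by omega)).mp hc)

end GWalk

/-- A path as a walk. -/
def GPath.toWalk (p : GPath E a b) : GWalk E a b := ⟨p.len, p.vtx, p.first, p.last, p.adj⟩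

@[simp] lemma GPath.toWalk_len (p : GPath E a b) : p.toWalk.len = p.len := rfl
@[simp] lemma GPath.toWalk_vtx (p : GPath E a b) (s : ℕ) : p.toWalk.vtx s = p.vtx s := rfl

lemma GPath.toWalk_col (p : GPath E a b) (s : ℕ) :
    p.toWalk.Col s ↔ p.IsColliderAt s := Iff.rfl

lemma GPath.toWalk_open {p : GPath E a b} {S : Set V} (h : p.OpenGiven S) :
    p.toWalk.Opn S := h

end Walks3
section Walks4

variable {V : Type*} {E : V → V → Prop} {a b : V}

namespace GWalk

/-- Cut out a loop between equal vertices at positions `i < j`. -/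
def cut (w : GWalk E a b) (i j : ℕ) (hij : i < j) (hj : j ≤ w.len)
    (heq : w.vtx i = w.vtx j) : GWalk E a b where
  len := w.len - (j - i)
  vtx s := if s ≤ i then w.vtx s else w.vtx (s + (j - i))
  first := by simp [w.first]
  last := by
    show (if w.len - (j - i) ≤ i then w.vtx (w.len - (j - i))
      else w.vtx (w.len - (j - i) + (j - i))) = b
    by_cases h : w.len - (j - i) ≤ i
    · have h2 : w.len = j := by omega
      have h3 : w.len - (j - i) = i := by omega
      rw [if_pos h, h3, heq, ← h2, w.last]
    · rw [if_neg h, show w.len - (j - i) + (j - i) = w.len by omega, w.last]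
  adj s hs := by
    have hs' : s < w.len - (j - i) := hs
    show E (if s ≤ i then w.vtx s else w.vtx (s + (j - i)))
        (if s + 1 ≤ i then w.vtx (s + 1) else w.vtx (s + 1 + (j - i))) ∨
      E (if s + 1 ≤ i then w.vtx (s + 1) else w.vtx (s + 1 + (j - i)))
        (if s ≤ i then w.vtx s else w.vtx (s + (j - i)))
    by_cases h1 : s + 1 ≤ i
    · rw [if_pos (by omega : s ≤ i), if_pos h1]
      exact w.adj s (by omega)
    · by_cases h2 : s ≤ i
      · rw [if_pos h2, if_neg h1, show s = i by omega, heq,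
          show i + 1 + (j - i) = j + 1 by omega]
        exact w.adj j (by omega)
      · rw [if_neg h2, if_neg h1, show s + 1 + (j - i) = (s + (j - i)) + 1 by omega]
        exact w.adj (s + (j - i)) (by omega)

variable {w : GWalk E a b} {i j : ℕ} {hij : i < j} {hj : j ≤ w.len}
  {heq : w.vtx i = w.vtx j}

@[simp] lemma cut_len : (w.cut i j hij hj heq).len = w.len - (j - i) := rfl

lemma cut_vtx_le {s : ℕ} (h : s ≤ i) : (w.cut i j hij hj heq).vtx s = w.vtx s := if_pos h

lemma cut_vtx_ge {s : ℕ} (h : i ≤ s) :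
    (w.cut i j hij hj heq).vtx s = w.vtx (s + (j - i)) := by
  by_cases h1 : s ≤ i
  · have h2 : s = i := by omega
    show (if s ≤ i then w.vtx s else w.vtx (s + (j - i))) = _
    rw [if_pos h1, h2, heq, show i + (j - i) = j by omega]
  · exact if_neg h1

lemma cut_col_lt {s : ℕ} (hs0 : 0 < s) (hs : s < i) :
    (w.cut i j hij hj heq).Col s ↔ w.Col s := by
  unfold Col
  rw [cut_vtx_le (by omega : s - 1 ≤ i), cut_vtx_le (by omega : s ≤ i),
    cut_vtx_le (by omega : s + 1 ≤ i), cut_len]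
  constructor
  · rintro ⟨h1, h2, h3, h4⟩; exact ⟨h1, by omega, h3, h4⟩
  · rintro ⟨h1, h2, h3, h4⟩; exact ⟨h1, by omega, h3, h4⟩

lemma cut_col_gt {s : ℕ} (hs : i < s) (hs2 : s < w.len - (j - i)) :
    (w.cut i j hij hj heq).Col s ↔ w.Col (s + (j - i)) := by
  unfold Col
  rw [cut_vtx_ge (by omega : i ≤ s - 1), cut_vtx_ge (by omega : i ≤ s),
    cut_vtx_ge (by omega : i ≤ s + 1), cut_len,
    show s - 1 + (j - i) = (s + (j - i)) - 1 by omega,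
    show s + 1 + (j - i) = (s + (j - i)) + 1 by omega]
  constructor
  · rintro ⟨h1, h2, h3, h4⟩; exact ⟨by omega, by omega, h3, h4⟩
  · rintro ⟨h1, h2, h3, h4⟩; exact ⟨by omega, by omega, h3, h4⟩

lemma cut_col_mid (h0 : 0 < i) (h2 : i < w.len - (j - i)) :
    (w.cut i j hij hj heq).Col i ↔
      (E (w.vtx (i - 1)) (w.vtx i) ∧ E (w.vtx (j + 1)) (w.vtx i)) := by
  unfold Col
  rw [cut_vtx_le (by omega : i - 1 ≤ i), cut_vtx_le (le_rfl),
    cut_vtx_ge (by omega : i ≤ i + 1), cut_len, show i + 1 + (j - i) = j + 1 by omega]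
  constructor
  · rintro ⟨_, _, h3, h4⟩; exact ⟨h3, h4⟩
  · rintro ⟨h3, h4⟩; exact ⟨h0, h2, h3, h4⟩

/-- From an open walk between distinct endpoints extract an open path. -/
lemma exists_path (hdag : Irreflexive (Relation.TransGen E)) {S : Set V} :
    ∀ n (w : GWalk E a b), w.len ≤ n → a ≠ b → w.Opn S →
    ∃ p : GPath E a b, p.OpenGiven S := by
  intro n
  induction n with
  | zero =>
    intro w hw hab _
    exfalso
    apply hab
    have : w.vtx 0 = w.vtx w.len := by rw [show w.len = 0 by omega]
    rw [w.first, w.last] at this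
    exact this
  | succ n ih =>
    intro w hw hab hopen
    by_cases hinj : ∀ i j, i ≤ w.len → j ≤ w.len → w.vtx i = w.vtx j → i = j
    · have hlen : 0 < w.len := by
        rcases Nat.eq_zero_or_pos w.len with h | h
        · exfalso
          apply hab
          have h2 : w.vtx 0 = w.vtx w.len := by rw [h]
          rw [w.first, w.last] at h2
          exact h2
        · exact h
      exact ⟨⟨w.len, hlen, w.vtx, w.first, w.last, hinj, w.adj⟩, hopen⟩
    · push_neg at hinj
      obtain ⟨i0, j0, hi0, hj0, heq0, hne0⟩ := hinj
      obtain ⟨i, j, hij, hjle, heq⟩ : ∃ i j, i < j ∧ j ≤ w.len ∧ w.vtx i = w.vtx j := by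
        rcases Nat.lt_or_ge i0 j0 with h | h
        · exact ⟨i0, j0, h, hj0, heq0⟩
        · exact ⟨j0, i0, by omega, hi0, heq0.symm⟩
      have hjlt : 0 < j - i := by omega
      set w' := w.cut i j hij hjle heq with hw'
      have hlen' : w'.len = w.len - (j - i) := rfl
      have hopen' : w'.Opn S := by
        constructor
        · intro s hs0 hslt hnc
          rw [hlen'] at hslt
          rcases Nat.lt_trichotomy s i with h | h | h
          · rw [hw', cut_vtx_le (by omega : s ≤ i)]
            refine hopen.1 s hs0 (by omega) (fun hc => hnc ?_)
            rw [hw']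
            exact (cut_col_lt hs0 h).mpr hc
          · subst h
            rw [hw', cut_vtx_le le_rfl]
            have hnc' : ¬ (E (w.vtx (s - 1)) (w.vtx s) ∧ E (w.vtx (j + 1)) (w.vtx s)) := by
              intro hc
              exact hnc (by rw [hw']; exact (cut_col_mid hs0 hslt).mpr hc)
            by_cases hA : E (w.vtx (s - 1)) (w.vtx s)
            · have hB : ¬ E (w.vtx (j + 1)) (w.vtx s) := fun h => hnc' ⟨hA, h⟩
              have hBj : ¬ E (w.vtx (j + 1)) (w.vtx j) := by rw [← heq]; exact hB
              have : w.vtx j ∉ S := by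
                refine hopen.1 j (by omega) (by omega) (fun hc => hBj hc.2.2.2)
              rw [heq]
              exact this
            · have hadj := w.adj (s - 1) (by omega)
              rw [show s - 1 + 1 = s by omega] at hadj
              rcases hadj with h1 | h1
              · exact absurd h1 hA
              · exact hopen.1 s hs0 (by omega) (fun hc => hA hc.2.2.1)
          · rw [hw', cut_vtx_ge (by omega : i ≤ s)]
            refine hopen.1 (s + (j - i)) (by omega) (by omega) (fun hc => hnc ?_)
            rw [hw']
            exact (cut_col_gt h hslt).mpr hc
        · intro s hc
          have hs0 : 0 < s := hc.1
          have hslt : s < w.len - (j - i) := by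
            have := hc.2.1
            rw [hlen'] at this
            exact this
          rcases Nat.lt_trichotomy s i with h | h | h
          · rw [hw', cut_vtx_le (by omega : s ≤ i)]
            exact hopen.2 s ((cut_col_lt hs0 h).mp (hw' ▸ hc))
          · subst h
            rw [hw', cut_vtx_le le_rfl]
            have hboth := (cut_col_mid hs0 hslt).mp (hw' ▸ hc)
            by_cases hC : E (w.vtx (s + 1)) (w.vtx s)
            · exact hopen.2 s ⟨hs0, by omega, hboth.1, hC⟩
            · have hadj := w.adj s (by omega)
              rcases hadj with h1 | h1
              · obtain ⟨t, ht1, ht2, ht3, ht4⟩ :=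
                  w.fwd j hjle j s (by omega) (by omega) h1
                rcases ht4 with rfl | ⟨htlt, he1, he2⟩
                · exfalso
                  rw [heq] at ht3
                  exact hdag _ ht3
                · obtain ⟨dd, hdS, hanc⟩ := hopen.2 t ⟨by omega, by omega, he1, he2⟩
                  exact ⟨dd, hdS, (Relation.TransGen.to_reflTransGen ht3).trans hanc⟩
              · exact absurd h1 hC
          · rw [hw', cut_vtx_ge (by omega : i ≤ s)]
            exact hopen.2 (s + (j - i)) ((cut_col_gt h hslt).mp (hw' ▸ hc))
      exact ih w' (by rw [hlen']; omega) hab hopen'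

end GWalk
end Walks4
section KeyA

variable {V : Type*}

lemma keyA (E : V → V → Prop)
    (hdag : Irreflexive (Relation.TransGen E))
    {k : ℕ} (X : Fin (k + 1) → V)
    (Y : V) (W : Set V)
    (hordWX : ∀ i, ∀ w ∈ W, ¬ Anc E (X i) w)
    (hordXX : ∀ i j : Fin (k + 1), i < j → ¬ Anc E (X j) (X i))
    (Wf : Fin (k + 1) → V) (hWf : ∀ i, Wf i ∈ W)
    (Z : Set V) (hZ : Z ⊆ W \ Set.range Wf)
    (i : Fin (k + 1))
    (hconn : ∃ p : GPath E (Wf i) Y, p.OpenGiven (Z ∪ X '' {j : Fin (k + 1) | j < i}))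
    (hsep : ∀ p : GPath E (Wf i) Y, ¬ p.OpenGiven (Z ∪ X '' {j : Fin (k + 1) | j ≤ i})) :
    ∃ (q : GPath E (Wf i) Y) (m : ℕ), 0 < m ∧ m < q.len ∧ q.vtx m = X i ∧
      E (q.vtx (m - 1)) (X i) ∧ E (X i) (q.vtx (m + 1)) ∧
      q.OpenGiven (Z ∪ X '' {j : Fin (k + 1) | j < i}) ∧ Relation.TransGen E (X i) Y := by
  obtain ⟨q, hq⟩ := hconn
  have hSS' : (Z ∪ X '' {j : Fin (k + 1) | j < i}) ⊆ (Z ∪ X '' {j : Fin (k + 1) | j ≤ i}) := by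
    apply Set.union_subset_union_right
    apply Set.image_mono
    intro j hj
    simp only [Set.mem_setOf_eq] at hj ⊢
    exact le_of_lt hj
  have hns := hsep q
  have hm : ∃ m, 0 < m ∧ m < q.len ∧ ¬ q.IsColliderAt m ∧
      q.vtx m ∈ (Z ∪ X '' {j : Fin (k + 1) | j ≤ i}) := by
    by_contra hcon
    push_neg at hcon
    apply hns
    constructor
    · exact hcon
    · intro s hcs
      obtain ⟨d, hd, hanc⟩ := hq.2 s hcs
      exact ⟨d, hSS' hd, hanc⟩
  obtain ⟨m, hm0, hmlt, hmnc, hmS⟩ := hm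
  have hnotS : q.vtx m ∉ (Z ∪ X '' {j : Fin (k + 1) | j < i}) := hq.1 m hm0 hmlt hmnc
  have hvm : q.vtx m = X i := by
    rcases hmS with hz | ⟨j, hji, hXj⟩
    · exact absurd (Or.inl hz) hnotS
    · have hji' : j ≤ i := hji
      rcases lt_or_eq_of_le hji' with h | h
      · exact absurd (Or.inr ⟨j, h, hXj⟩) hnotS
      · rw [← hXj, h]
  -- a directed edge out of `X i` towards the `Wf i` side leads to a contradiction
  have hback : ¬ E (q.vtx m) (q.vtx (m - 1)) := by
    intro hE
    obtain ⟨t, ht0, htm, htg, htalt⟩ :=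
      q.toWalk.bwd 0 m m (by omega) hm0 (by simpa using le_of_lt hmlt) hE
    simp only [GPath.toWalk_vtx] at htg htalt
    have hXt : Relation.TransGen E (X i) (q.vtx t) := by rw [← hvm]; exact htg
    rcases htalt with rfl | ⟨ht0', he1, he2⟩
    · rw [q.first] at hXt
      exact hordWX i (Wf i) (hWf i) hXt.to_reflTransGen
    · obtain ⟨d, hd, hanc⟩ := hq.2 t ⟨ht0', by omega, he1, he2⟩
      have hXd : Anc E (X i) d := (hXt.to_reflTransGen).trans hanc
      rcases hd with hz | ⟨j, hji, hXj⟩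
      · exact hordWX i d ((hZ hz).1) hXd
      · rw [← hXj] at hXd
        exact hordXX j i hji hXd
  have hleft : E (q.vtx (m - 1)) (X i) := by
    have hadj := q.adj (m - 1) (by omega)
    rw [show m - 1 + 1 = m by omega] at hadj
    rcases hadj with h | h
    · rw [← hvm]; exact h
    · exact absurd h hback
  have hright : E (X i) (q.vtx (m + 1)) := by
    rcases q.adj m hmlt with h | h
    · rw [← hvm]; exact h
    · exact absurd ⟨hm0, hmlt, by rw [hvm]; exact hleft, h⟩ hmnc
  have hTG : Relation.TransGen E (X i) Y := by
    obtain ⟨t, ht0, htle, htg, htalt⟩ :=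
      q.toWalk.fwd q.len le_rfl q.len m (by omega) hmlt
        (by rw [GPath.toWalk_vtx, GPath.toWalk_vtx, hvm]; exact hright)
    simp only [GPath.toWalk_vtx] at htg htalt
    have hXt : Relation.TransGen E (X i) (q.vtx t) := by rw [← hvm]; exact htg
    rcases htalt with rfl | ⟨htlt, he1, he2⟩
    · rw [q.last] at hXt
      exact hXt
    · exfalso
      obtain ⟨d, hd, hanc⟩ := hq.2 t ⟨by omega, htlt, he1, he2⟩
      have hXd : Anc E (X i) d := (hXt.to_reflTransGen).trans hanc
      rcases hd with hz | ⟨j, hji, hXj⟩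
      · exact hordWX i d ((hZ hz).1) hXd
      · rw [← hXj] at hXd
        exact hordXX j i hji hXd
  exact ⟨q, m, hm0, hmlt, hvm, hleft, hright, hq, hTG⟩

end KeyA
section KeyB

variable {V : Type*}

lemma keyB (E : V → V → Prop)
    (hdag : Irreflexive (Relation.TransGen E))
    {k : ℕ} (X : Fin (k + 1) → V)
    (Y : V) (W : Set V) (hYW : Y ∉ W)
    (hordWX : ∀ i, ∀ w ∈ W, ¬ Anc E (X i) w)
    (hordXX : ∀ i j : Fin (k + 1), i < j → ¬ Anc E (X j) (X i))
    (Wf : Fin (k + 1) → V) (hWf : ∀ i, Wf i ∈ W)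
    (Z : Set V) (hZ : Z ⊆ W \ Set.range Wf)
    (hA : ∀ i, ∃ (q : GPath E (Wf i) Y) (m : ℕ), 0 < m ∧ m < q.len ∧ q.vtx m = X i ∧
      E (q.vtx (m - 1)) (X i) ∧ E (X i) (q.vtx (m + 1)) ∧
      q.OpenGiven (Z ∪ X '' {j : Fin (k + 1) | j < i}))
    (hsep : ∀ i, ∀ p : GPath E (Wf i) Y,
      ¬ p.OpenGiven (Z ∪ X '' {j : Fin (k + 1) | j ≤ i}))
    (i : Fin (k + 1)) :
    BlocksBackdoor E (X i) Y (Z ∪ (Set.range X \ {X i})) := by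
  intro p hbd hpopen
  set T : Set V := Z ∪ (Set.range X \ {X i}) with hT
  have hWfY : ∀ j : Fin (k + 1), Wf j ≠ Y := fun j h => hYW (h ▸ hWf j)
  -- given a target index `j`, openness of the prefix of the witness path `q_j`
  have hprefix : ∀ (j : Fin (k + 1)) (q : GPath E (Wf j) Y) (m : ℕ) (hm0 : 0 < m)
      (hmlt : m < q.len) (hvm : q.vtx m = X j),
      q.OpenGiven (Z ∪ X '' {t : Fin (k + 1) | t < j}) →
      (q.toWalk.take m (le_of_lt hmlt) hvm).Opn (Z ∪ X '' {t : Fin (k + 1) | t ≤ j}) := by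
    intro j q m hm0 hmlt hvm hqopen
    constructor
    · intro s hs0 hslt hnc
      have hslt' : s < m := hslt
      have hnc' : ¬ q.IsColliderAt s := by
        intro hc
        exact hnc ((GWalk.take_col hslt').mpr hc)
      have hnotS := hqopen.1 s hs0 (by omega) hnc'
      show q.vtx s ∉ _
      rintro (hz | ⟨t, htj, hXt⟩)
      · exact hnotS (Or.inl hz)
      · have htj' : t ≤ j := htj
        rcases lt_or_eq_of_le htj' with h | h
        · exact hnotS (Or.inr ⟨t, h, hXt⟩)
        · subst h
          rw [← hvm] at hXt
          exact absurd (q.inj m s (by omega) (by omega) hXt) (by omega)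
    · intro s hc
      have hslt' : s < m := hc.2.1
      have hc' : q.IsColliderAt s := (GWalk.take_col hslt').mp hc
      obtain ⟨d, hd, hanc⟩ := hqopen.2 s hc'
      refine ⟨d, ?_, hanc⟩
      rcases hd with hz | ⟨t, htj, hXt⟩
      · exact Or.inl hz
      · have htj' : t < j := htj
        exact Or.inr ⟨t, le_of_lt htj', hXt⟩
  by_cases hP : ∀ c, p.IsColliderAt c →
      ∃ d ∈ (Z ∪ X '' {t : Fin (k + 1) | t ≤ i}), Anc E (p.vtx c) d
  · -- no problematic collider: splice at `i` and contradict `hsep i`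
    obtain ⟨q, m, hm0, hmlt, hvm, hleft, hright, hqopen⟩ := hA i
    set w1 := q.toWalk.take m (le_of_lt hmlt) hvm with hw1
    set w2 := p.toWalk with hw2
    have h1 : w1.Opn (Z ∪ X '' {t : Fin (k + 1) | t ≤ i}) :=
      hprefix i q m hm0 hmlt hvm hqopen
    have h2 : w2.Opn (Z ∪ X '' {t : Fin (k + 1) | t ≤ i}) := by
      constructor
      · intro s hs0 hslt hnc
        have hnotT := hpopen.1 s hs0 hslt hnc
        rw [GPath.toWalk_vtx]
        rintro (hz | ⟨t, _, hXt⟩)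
        · exact hnotT (Or.inl hz)
        · by_cases hti : X t = X i
          · have heq0 : p.vtx s = p.vtx 0 := hXt.symm.trans (hti.trans p.first.symm)
            have hslt' : s < p.len := hslt
            exact absurd (p.inj s 0 (by omega) (by omega) heq0) (by omega)
          · exact hnotT (Or.inr ⟨⟨t, hXt⟩, fun h => hti (hXt.trans h)⟩)
      · exact hP
    have hw : (w1.append w2).Opn (Z ∪ X '' {t : Fin (k + 1) | t ≤ i}) := by
      refine GWalk.append_open h1 h2 ?_ ?_
      · intro _ _ _ _
        exact ⟨X i, Or.inr ⟨i, by simp, rfl⟩, Relation.ReflTransGen.refl⟩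
      · intro hl1 hl2 hn
        exfalso
        apply hn
        constructor
        · show E (w1.vtx (w1.len - 1)) (X i)
          rw [hw1]
          have : q.toWalk.vtx (m - 1) = q.vtx (m - 1) := rfl
          exact hleft
        · show E (w2.vtx 1) (X i)
          rw [hw2]
          have := hbd
          rw [GPath.IsBackdoor, p.first] at this
          exact this
    obtain ⟨p', hp'⟩ := GWalk.exists_path hdag (w1.append w2).len (w1.append w2)
      le_rfl (hWfY i) hw
    exact hsep i p' hp'
  · -- there is a problematic collider
    push_neg at hP
    obtain ⟨c0, hc0col, hc0no⟩ := hP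
    set P : ℕ → Prop := fun c => p.IsColliderAt c ∧
      ∀ d ∈ (Z ∪ X '' {t : Fin (k + 1) | t ≤ i}), ¬ Anc E (p.vtx c) d with hPdef
    have hc0P : P c0 := ⟨hc0col, hc0no⟩
    set c := Nat.findGreatest P p.len with hcdef
    have hcP : P c := Nat.findGreatest_spec (le_of_lt hc0col.2.1) hc0P
    have hcmax : ∀ s, c < s → s ≤ p.len → ¬ P s :=
      fun s h1 h2 => Nat.findGreatest_is_greatest h1 h2
    obtain ⟨hccol, hcno⟩ := hcP
    set v := p.vtx c with hv
    have hnod : ∀ u, Anc E v u → u ∉ (Z ∪ X '' {t : Fin (k + 1) | t ≤ i}) :=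
      fun u hu hmem => hcno u hmem hu
    -- the later treatment opening `c`
    obtain ⟨d0, hd0T, hd0anc⟩ := hpopen.2 c hccol
    have hd0X : ∃ j0 : Fin (k + 1), d0 = X j0 ∧ i < j0 := by
      rcases hd0T with hz | ⟨⟨j0, hj0⟩, hdne⟩
      · exact absurd (Or.inl hz) (hnod d0 hd0anc)
      · refine ⟨j0, hj0.symm, ?_⟩
        rcases le_or_gt j0 i with h | h
        · exact absurd (Or.inr ⟨j0, h, hj0⟩) (hnod d0 hd0anc)
        · exact h
    obtain ⟨j0, rfl, hij0⟩ := hd0X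
    -- minimal later treatment reachable from `v`
    have hMne : ({j : Fin (k + 1) | i < j ∧ Anc E v (X j)} : Set (Fin (k+1))).Nonempty :=
      ⟨j0, hij0, hd0anc⟩
    set Mset : Finset (Fin (k + 1)) :=
      Finset.univ.filter (fun j => i < j ∧ Anc E v (X j)) with hMset
    have hMne' : Mset.Nonempty := ⟨j0, by simp [hMset]; exact ⟨hij0, hd0anc⟩⟩
    set j : Fin (k + 1) := Mset.min' hMne' with hjdef
    have hjM : i < j ∧ Anc E v (X j) := by
      have h := Mset.min'_mem hMne'
      simp only [hMset, Finset.mem_filter] at h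
      exact h.2
    have hjmin : ∀ t : Fin (k + 1), i < t → Anc E v (X t) → j ≤ t := by
      intro t h1 h2
      exact Mset.min'_le t (by simp [hMset]; exact ⟨h1, h2⟩)
    obtain ⟨hij, hvj⟩ := hjM
    -- directed walk from v to X j
    obtain ⟨D, hD⟩ := GWalk.exists_dirWalk hvj
    -- interior vertices of D avoid the conditioning set
    have hint : ∀ s, s < D.len → D.vtx s ∉ (Z ∪ X '' {t : Fin (k + 1) | t ≤ j}) := by
      intro s hs hmem
      have hanc : Anc E v (D.vtx s) := by
        have := hD.anc (s := 0) s (Nat.zero_le s) (le_of_lt hs)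
        rw [D.first] at this
        exact this
      have htg : Relation.TransGen E (D.vtx s) (X j) := by
        have := hD.transGen hs le_rfl
        rw [D.last] at this
        exact this
      rcases hmem with hz | ⟨t, htj, hXt⟩
      · exact hnod _ hanc (Or.inl hz)
      · have htj' : t ≤ j := htj
        rcases le_or_gt t i with h | h
        · exact hnod _ hanc (Or.inr ⟨t, h, hXt⟩)
        · rcases lt_or_eq_of_le htj' with h2 | h2
          · have : j ≤ t := hjmin t h (by rw [hXt]; exact hanc)
            omega
          · rw [h2] at hXt
            rw [← hXt] at htg
            exact hdag _ htg
    -- the suffix of `p` from `c`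
    have hclen : c ≤ p.len := le_of_lt hccol.2.1
    set w3 := p.toWalk.drop c hclen rfl with hw3
    obtain ⟨q, m, hm0, hmlt, hvm, hleft, hright, hqopen⟩ := hA j
    set w1 := q.toWalk.take m (le_of_lt hmlt) hvm with hw1
    have h1 : w1.Opn (Z ∪ X '' {t : Fin (k + 1) | t ≤ j}) :=
      hprefix j q m hm0 hmlt hvm hqopen
    have hR2 : (D.rev).Opn (Z ∪ X '' {t : Fin (k + 1) | t ≤ j}) := by
      constructor
      · intro s hs0 hslt hnc
        have hslt' : s < D.len := by simpa using hslt
        rw [GWalk.rev_vtx]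
        exact hint (D.len - s) (by omega)
      · intro s hc
        exfalso
        have hs0 : 0 < s := hc.1
        have hslt : s < D.len := by
          have h := hc.2.1
          simpa using h
        have he1 : E ((D.rev).vtx (s - 1)) ((D.rev).vtx s) := hc.2.2.1
        have he2 : E ((D.rev).vtx s) ((D.rev).vtx (s - 1)) := by
          have h := GWalk.rev_dir hD (s - 1) (by omega)
          rw [show s - 1 + 1 = s by omega] at h
          exact h
        exact GWalk.no2cycle hdag he1 he2
    have h3 : w3.Opn (Z ∪ X '' {t : Fin (k + 1) | t ≤ j}) := by
      constructor
      · intro s hs0 hslt hnc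
        have hslt' : s < p.len - c := hslt
        have hnc' : ¬ p.IsColliderAt (c + s) := by
          intro hcc
          exact hnc ((GWalk.drop_col hs0 hslt').mpr hcc)
        have hnotT := hpopen.1 (c + s) (by omega) (by omega) hnc'
        show p.vtx (c + s) ∉ _
        rintro (hz | ⟨t, htj, hXt⟩)
        · exact hnotT (Or.inl hz)
        · by_cases hti : X t = X i
          · have heq0 : p.vtx (c + s) = p.vtx 0 := hXt.symm.trans (hti.trans p.first.symm)
            exact absurd (p.inj (c + s) 0 (by omega) (by omega) heq0) (by omega)
          · exact hnotT (Or.inr ⟨⟨t, hXt⟩, fun h => hti (hXt.trans h)⟩)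
      · intro s hc2
        have hs0 : 0 < s := hc2.1
        have hslt' : s < p.len - c := hc2.2.1
        have hcc : p.IsColliderAt (c + s) := (GWalk.drop_col hs0 hslt').mp hc2
        have hnP := hcmax (c + s) (by omega) (by omega)
        have : ∃ d ∈ (Z ∪ X '' {t : Fin (k + 1) | t ≤ i}), Anc E (p.vtx (c + s)) d := by
          by_contra hcon
          push_neg at hcon
          exact hnP ⟨hcc, hcon⟩
        obtain ⟨d, hd, hanc⟩ := this
        refine ⟨d, ?_, by exact hanc⟩
        rcases hd with hz | ⟨t, hti, hXt⟩
        · exact Or.inl hz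
        · exact Or.inr ⟨t, le_trans hti (le_of_lt hij), hXt⟩
    -- assemble
    have hInner : ((D.rev).append w3).Opn (Z ∪ X '' {t : Fin (k + 1) | t ≤ j}) := by
      refine GWalk.append_open hR2 h3 ?_ ?_
      · intro hl1 _ he1 _
        exfalso
        have hrlen : 0 < D.len := hl1
        have he1' : E v ((D.rev).vtx ((D.rev).len - 1)) := by
          have h := hD 0 hrlen
          rw [D.first] at h
          rw [GWalk.rev_vtx, GWalk.rev_len, show D.len - (D.len - 1) = 1 by omega]
          exact h
        exact GWalk.no2cycle hdag he1' he1
      · intro hl1 _ _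
        have hl1' : 0 < D.len := by simpa using hl1
        have h := hint 0 hl1'
        rw [D.first] at h
        exact h
    have hOuter : (w1.append ((D.rev).append w3)).Opn (Z ∪ X '' {t : Fin (k + 1) | t ≤ j}) := by
      refine GWalk.append_open h1 hInner ?_ ?_
      · intro _ _ _ _
        exact ⟨X j, Or.inr ⟨j, by simp, rfl⟩, Relation.ReflTransGen.refl⟩
      · intro hl1 hl2 hn
        exfalso
        apply hn
        constructor
        · exact hleft
        · show E (((D.rev).append w3).vtx 1) (X j)
          rcases Nat.eq_zero_or_pos (D.rev).len with h0 | h0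
          · have hDlen : D.len = 0 := by simpa using h0
            have h2 := D.last
            rw [hDlen] at h2
            have hvXj : v = X j := D.first.symm.trans h2
            have e1 : (((D.rev).append w3).vtx 1) = p.vtx (c + 1) := by
              show (if 1 ≤ D.len then D.rev.vtx 1 else p.vtx (c + (1 - D.len))) = p.vtx (c + 1)
              simp [hDlen]
            rw [e1]
            have hE : E (p.vtx (c + 1)) (p.vtx c) := hccol.2.2.2
            rw [← hvXj]
            exact hE
          · rw [show ((D.rev).append w3).vtx 1 = (D.rev).vtx 1 from GWalk.append_vtx_le (by omega)]
            have h := GWalk.rev_dir hD 0 (by simpa using h0)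
            rw [show (0 : ℕ) + 1 = 1 by omega] at h
            have hR0 : (D.rev).vtx 0 = X j := (D.rev).first
            rw [hR0] at h
            exact h
    obtain ⟨p', hp'⟩ := GWalk.exists_path hdag (w1.append ((D.rev).append w3)).len _
      le_rfl (hWfY j) hOuter
    exact hsep j p' hp'

end KeyB

/-- **R1 Build (graphical version).** With treatments `X 0 < ⋯ < X k` and witnesses
`Wf i` satisfying the d-connection/d-separation conditions, every `X i` has a directed
path to `Y` with at least one edge, `Z ∪ (range X \ {X i})` blocks every back-door path
from `X i` to `Y`, and `Z` satisfies the back-door criterion relative to `(range X, {Y})`. -/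
theorem stmt_4 [Fintype V] (E : V → V → Prop)
    (hdag : Irreflexive (Relation.TransGen E))
    (k : ℕ) (X : Fin (k + 1) → V) (hXinj : Function.Injective X)
    (Y : V) (W : Set V)
    (hXY : ∀ i, X i ≠ Y) (hXW : ∀ i, X i ∉ W) (hYW : Y ∉ W)
    (hordWX : ∀ i, ∀ w ∈ W, ¬ Anc E (X i) w)
    (hordWY : ∀ w ∈ W, ¬ Anc E Y w)
    (hordXX : ∀ i j : Fin (k + 1), i < j → ¬ Anc E (X j) (X i))
    (hordXY : ∀ i, ¬ Anc E Y (X i))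
    (Wf : Fin (k + 1) → V) (hWf : ∀ i, Wf i ∈ W)
    (Z : Set V) (hZ : Z ⊆ W \ Set.range Wf)
    (hconn : ∀ i, ∃ p : GPath E (Wf i) Y,
      p.OpenGiven (Z ∪ X '' {j : Fin (k + 1) | j < i}))
    (hsep : ∀ i, ∀ p : GPath E (Wf i) Y,
      ¬ p.OpenGiven (Z ∪ X '' {j : Fin (k + 1) | j ≤ i})) :
    (∀ i, Relation.TransGen E (X i) Y ∧
        BlocksBackdoor E (X i) Y (Z ∪ (Set.range X \ {X i}))) ∧
      BackdoorCriterion E (Set.range X) {Y} Z := by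
  have hA := fun i => keyA E hdag X Y W hordWX hordXX Wf hWf Z hZ i (hconn i) (hsep i)
  have hA' : ∀ i, ∃ (q : GPath E (Wf i) Y) (m : ℕ), 0 < m ∧ m < q.len ∧ q.vtx m = X i ∧
      E (q.vtx (m - 1)) (X i) ∧ E (X i) (q.vtx (m + 1)) ∧
      q.OpenGiven (Z ∪ X '' {j : Fin (k + 1) | j < i}) := by
    intro i
    obtain ⟨q, m, h1, h2, h3, h4, h5, h6, _⟩ := hA i
    exact ⟨q, m, h1, h2, h3, h4, h5, h6⟩
  have hblock : ∀ i, BlocksBackdoor E (X i) Y (Z ∪ (Set.range X \ {X i})) :=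
    fun i => keyB E hdag X Y W hYW hordWX hordXX Wf hWf Z hZ hA' hsep i
  refine ⟨fun i => ⟨?_, hblock i⟩, ?_, ?_⟩
  · obtain ⟨q, m, _, _, _, _, _, _, hTG⟩ := hA i
    exact hTG
  · ext z
    simp only [Set.mem_inter_iff, Set.mem_empty_iff_false, iff_false, not_and]
    intro hz hdesc
    obtain ⟨x, ⟨i, rfl⟩, hanc⟩ := hdesc
    exact hordWX i z ((hZ hz).1) hanc
  · rintro x ⟨i, rfl⟩ y hy
    have hyY : y = Y := hy
    subst hyY
    exact hblock i
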